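/- If x^[k] is obtained from citation vector x by adding one citation to publication k and rec(x^[k]) ≠ rec(x), then rec(x^[k]) − rec(x) ≤ min(k, x_k + 1) ≤ √(rec(x^[k])). -/

import Mathlib

/-- A citation vector: a finite nonincreasing list of positive integers. -/
def CitVec (x : List ℕ) : Prop :=
  (∀ a ∈ x, 0 < a) ∧ List.Pairwise (· ≥ ·) x

/-- The rec-index: max over 1 ≤ i ≤ n of i·x_i (0 for the empty vector). -/
def recIdx (x : List ℕ) : ℕ :=
  ((List.range x.length).map (fun i => (i + 1) * x.getD i 0)).foldr max 0

/-- Domination: u ⊑ x. -/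
def Dom (u x : List ℕ) : Prop :=
  u.length ≤ x.length ∧ ∀ i < u.length, u.getD i 0 ≤ x.getD i 0

/-- Uniform: all entries equal. -/
def Uniform (x : List ℕ) : Prop := ∀ a ∈ x, ∀ b ∈ x, a = b

/-- x^[k]: add one citation to publication k (1-indexed; append a 1 if k = n+1). -/
def incr (x : List ℕ) (k : ℕ) : List ℕ :=
  if k ≤ x.length then x.set (k - 1) (x.getD (k - 1) 0 + 1) else x ++ [1]

/-- k is the smallest index j with x_j = x_k (taking x_{n+1} = 0);
equivalently all earlier entries are strictly larger. -/
def MinIndex (x : List ℕ) (k : ℕ) : Prop :=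
  1 ≤ k ∧ k ≤ x.length + 1 ∧ ∀ j, 1 ≤ j → j < k → x.getD (k - 1) 0 < x.getD (j - 1) 0

lemma le_foldr_max {l : List ℕ} {a : ℕ} (h : a ∈ l) : a ≤ l.foldr max 0 := by
  induction l with
  | nil => simp at h
  | cons b t ih =>
    rcases List.mem_cons.mp h with rfl | h
    · simp [le_max_iff]
    · simp only [List.foldr_cons, le_max_iff]; right; exact ih h

lemma foldr_max_le {l : List ℕ} {m : ℕ} (h : ∀ a ∈ l, a ≤ m) : l.foldr max 0 ≤ m := by
  induction l with
  | nil => simp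
  | cons b t ih =>
    simp only [List.foldr_cons, max_le_iff]
    exact ⟨h b (by simp), ih fun a ha => h a (by simp [ha])⟩

lemma term_le_recIdx (x : List ℕ) {i : ℕ} (hi : i < x.length) :
    (i + 1) * x.getD i 0 ≤ recIdx x :=
  le_foldr_max (List.mem_map_of_mem (List.mem_range.mpr hi))

lemma recIdx_le {x : List ℕ} {m : ℕ} (h : ∀ i < x.length, (i + 1) * x.getD i 0 ≤ m) :
    recIdx x ≤ m := by
  apply foldr_max_le
  intro a ha
  simp only [List.mem_map, List.mem_range] at ha
  obtain ⟨i, hi, rfl⟩ := ha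
  exact h i hi

theorem rec_incr_diff_bound (x : List ℕ) (k : ℕ) (hx : CitVec x)
    (hk : MinIndex x k) (hne : recIdx (incr x k) ≠ recIdx x) :
    recIdx (incr x k) - recIdx x ≤ min k (x.getD (k - 1) 0 + 1) ∧
    ((min k (x.getD (k - 1) 0 + 1) : ℕ) : ℝ) ≤ Real.sqrt (recIdx (incr x k)) := by
  obtain ⟨hk1, hk2, hk3⟩ := hk
  set v := x.getD (k - 1) 0 with hv
  -- rec(x) ≥ k·v
  have hkv : k * v ≤ recIdx x := by
    by_cases hcase : k ≤ x.length
    · have := term_le_recIdx x (show k - 1 < x.length by omega)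
      rwa [show k - 1 + 1 = k by omega] at this
    · have hv0 : v = 0 := by
        rw [hv]; exact List.getD_eq_default _ _ (by omega)
      simp [hv0]
  -- rec(x) ≥ (k−1)(v+1) for k ≥ 2
  have h6 : 2 ≤ k → (k - 1) * (v + 1) ≤ recIdx x := by
    intro h2
    have hlt := hk3 (k - 1) (by omega) (by omega)
    rw [show k - 1 - 1 = k - 2 by omega] at hlt
    have hterm := term_le_recIdx x (show k - 2 < x.length by omega)
    rw [show k - 2 + 1 = k - 1 by omega] at hterm
    calc (k - 1) * (v + 1) ≤ (k - 1) * x.getD (k - 2) 0 :=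
          Nat.mul_le_mul_left _ (by omega)
      _ ≤ recIdx x := hterm
  -- rec(incr x k) = k(v+1)
  have hmain : recIdx (incr x k) = k * (v + 1) := by
    by_cases hcase : k ≤ x.length
    · have hy : incr x k = x.set (k - 1) (v + 1) := by
        simp only [incr, if_pos hcase]
        rfl
      set y := x.set (k - 1) (v + 1) with hydef
      have hlen : y.length = x.length := List.length_set ..
      have hgetD : ∀ i < x.length, y.getD i 0 = if k - 1 = i then v + 1 else x.getD i 0 := by
        intro i hi
        have hi' : i < y.length := by rw [hlen]; exact hi
        rw [List.getD_eq_getElem _ _ hi']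
        simp only [hydef, List.getElem_set]
        split
        · rfl
        · exact List.getD_eq_getElem _ _ hi |>.symm
      have H4 : k * (v + 1) ≤ recIdx y := by
        have := term_le_recIdx y (show k - 1 < y.length by rw [hlen]; omega)
        rwa [hgetD (k - 1) (by omega), if_pos rfl, show k - 1 + 1 = k by omega] at this
      have H3 : recIdx x ≤ recIdx y := by
        apply recIdx_le
        intro i hi
        have hle : x.getD i 0 ≤ y.getD i 0 := by
          rw [hgetD i hi]; split
          · rename_i heq; subst heq; omega
          · exact le_refl _
        calc (i + 1) * x.getD i 0 ≤ (i + 1) * y.getD i 0 := Nat.mul_le_mul_left _ hle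
          _ ≤ recIdx y := term_le_recIdx y (by rw [hlen]; exact hi)
      have H2 : recIdx y ≤ max (recIdx x) (k * (v + 1)) := by
        apply recIdx_le
        intro i hi
        rw [hlen] at hi
        rw [hgetD i hi]
        split
        · rename_i heq
          rw [← heq, show k - 1 + 1 = k by omega]
          exact le_max_right _ _
        · exact le_trans (term_le_recIdx x hi) (le_max_left _ _)
      rw [hy] at hne ⊢
      omega
    · have hy : incr x k = x ++ [1] := by simp [incr, hcase]
      have hkeq : k = x.length + 1 := by omega
      have hv0 : v = 0 := by
        rw [hv]; exact List.getD_eq_default _ _ (by omega)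
      set y := x ++ [1] with hydef
      have hlen : y.length = x.length + 1 := by simp [hydef]
      have hg1 : y.getD x.length 0 = 1 := by
        rw [hydef, List.getD_append_right _ _ _ _ (le_refl _)]
        simp
      have hg2 : ∀ i < x.length, y.getD i 0 = x.getD i 0 := by
        intro i hi
        rw [hydef, List.getD_append _ _ _ _ hi]
      have H4 : k * (v + 1) ≤ recIdx y := by
        have := term_le_recIdx y (show x.length < y.length by omega)
        rw [hg1] at this
        rw [hv0, hkeq]
        simpa using this
      have H3 : recIdx x ≤ recIdx y := by
        apply recIdx_le
        intro i hi
        rw [← hg2 i hi]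
        exact term_le_recIdx y (by omega)
      have H2 : recIdx y ≤ max (recIdx x) (k * (v + 1)) := by
        apply recIdx_le
        intro i hi
        rw [hlen] at hi
        rcases Nat.lt_or_ge i x.length with h | h
        · rw [hg2 i h]
          exact le_trans (term_le_recIdx x h) (le_max_left _ _)
        · have : i = x.length := by omega
          subst this
          rw [hg1, hv0, hkeq]
          simp
      rw [hy] at hne ⊢
      omega
  refine ⟨?_, ?_⟩
  · rw [hmain]
    apply le_min
    · have e : k * (v + 1) = k * v + k := by ring
      omega
    · rcases Nat.lt_or_ge k 2 with hklt | hk2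
      · have hk1' : k = 1 := by omega
        subst hk1'
        simp only [one_mul] at hkv ⊢
        omega
      · have h6' := h6 hk2
        have e : k * (v + 1) = (k - 1) * (v + 1) + (v + 1) := by
          have h1 : k - 1 + 1 = k := by omega
          calc k * (v + 1) = (k - 1 + 1) * (v + 1) := by rw [h1]
            _ = (k - 1) * (v + 1) + (v + 1) := by ring
        omega
  · rw [hmain]
    apply Real.le_sqrt_of_sq_le
    have h1 : min k (v + 1) ≤ k := min_le_left _ _
    have h2 : min k (v + 1) ≤ v + 1 := min_le_right _ _
    have : (min k (v + 1)) ^ 2 ≤ k * (v + 1) := by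
      rw [pow_two]
      exact Nat.mul_le_mul h1 h2
    calc ((min k (v + 1) : ℕ) : ℝ) ^ 2 = ((min k (v + 1)) ^ 2 : ℕ) := by push_cast; ring
      _ ≤ ((k * (v + 1) : ℕ) : ℝ) := by exact_mod_cast this
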